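/- Let C be a strict monoidal category with exactly one object, and S a complete semiring. Then for any elements a, b, c, d ∈ Q_S(C) such that b or c takes values in the center of S, the multiplicative compatibility relation (a × b) · (c × d) = (a · c) × (b · d) holds in Q_S(C), where · is the composition convolution product and × is the monoidal convolution product. -/

import Mathlib

/-- A complete (additive, commutative) monoid in the sense of Eilenberg: a commutative
monoid equipped with a summation law over arbitrary index sets, extending finite sums
and satisfying the partition axiom. -/
class CompleteAddMonoid (M : Type) [AddCommMonoid M] where
  csum : {I : Type} → (I → M) → M
  csum_empty : ∀ {I : Type} [IsEmpty I] (f : I → M), csum f = 0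
  csum_unique : ∀ {I : Type} [Unique I] (f : I → M), csum f = f default
  csum_pair : ∀ (f : Bool → M), csum f = f true + f false
  csum_partition : ∀ {I J : Type} (p : I → J) (f : I → M),
    csum (fun j : J => csum (fun i : {i : I // p i = j} => f i.1)) = csum f

/-- A complete semiring: a semiring whose additive monoid is complete and where
multiplication distributes over infinite sums from both sides. -/
class CompleteSemiring (S : Type) [Semiring S] extends CompleteAddMonoid S where
  csum_mul_left : ∀ {I : Type} (s : S) (f : I → S),
    s * csum f = csum (fun i => s * f i)
  csum_mul_right : ∀ {I : Type} (s : S) (f : I → S),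
    csum f * s = csum (fun i => f i * s)

open CompleteAddMonoid

open CategoryTheory

open scoped Classical

/-- The set of all morphisms of a small category, as a type. -/
def Mor (C : Type) [SmallCategory C] : Type := Σ X Y : C, X ⟶ Y

/-- A strict monoidal structure on a small category `C`: a tensor product on objects
and morphisms which is strictly associative and strictly unital, together with the
interchange law making it a bifunctor. -/
structure StrictMonoidalStruct (C : Type) [SmallCategory C] where
  tO : C → C → C
  unit : C
  tH : {X Y X' Y' : C} → (X ⟶ Y) → (X' ⟶ Y') → (tO X X' ⟶ tO Y Y')
  assocO : ∀ X Y Z : C, tO (tO X Y) Z = tO X (tO Y Z)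
  unitO_left : ∀ X : C, tO unit X = X
  unitO_right : ∀ X : C, tO X unit = X
  assocH : ∀ {X Y X' Y' X'' Y'' : C} (f : X ⟶ Y) (g : X' ⟶ Y') (h : X'' ⟶ Y''),
    HEq (tH (tH f g) h) (tH f (tH g h))
  unitH_left : ∀ {X Y : C} (f : X ⟶ Y), HEq (tH (𝟙 unit) f) f
  unitH_right : ∀ {X Y : C} (f : X ⟶ Y), HEq (tH f (𝟙 unit)) f
  id_tensor_id : ∀ X Y : C, tH (𝟙 X) (𝟙 Y) = 𝟙 (tO X Y)
  interchange : ∀ {X Y Z X' Y' Z' : C} (f : X ⟶ Y) (g : Y ⟶ Z) (f' : X' ⟶ Y') (g' : Y' ⟶ Z'),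
    tH (f ≫ g) (f' ≫ g') = tH f f' ≫ tH g g'

/-- The tensor product of two morphisms, at the level of the set `Mor C`. -/
def StrictMonoidalStruct.tMor {C : Type} [SmallCategory C]
    (M : StrictMonoidalStruct C) (m m' : Mor C) : Mor C :=
  ⟨M.tO m.1 m'.1, M.tO m.2.1 m'.2.1, M.tH m.2.2 m'.2.2⟩

/-- The composition convolution product on `Q_S(C)`:
`(f · g)(γ) = ∑_{β ∘ α = γ} g(β) · f(α)`. -/
noncomputable def convC {S : Type} [Semiring S] [CompleteSemiring S]
    {C : Type} [SmallCategory C] (f g : Mor C → S) : Mor C → S :=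
  fun γ => csum (fun t : Σ Z : C, {p : (γ.1 ⟶ Z) × (Z ⟶ γ.2.1) // p.1 ≫ p.2 = γ.2.2} =>
    g ⟨t.1, γ.2.1, t.2.1.2⟩ * f ⟨γ.1, t.1, t.2.1.1⟩)

/-- The monoidal convolution product on `Q_S(C)`:
`(f × g)(γ) = ∑_{α ⊗ β = γ} g(β) · f(α)`. -/
noncomputable def convM {S : Type} [Semiring S] [CompleteSemiring S]
    {C : Type} [SmallCategory C] (M : StrictMonoidalStruct C)
    (f g : Mor C → S) : Mor C → S :=
  fun γ => csum (fun t : {p : Mor C × Mor C // M.tMor p.1 p.2 = γ} =>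
    g t.1.2 * f t.1.1)

section AuxSum

variable {S : Type} [Semiring S] [CompleteSemiring S]

lemma my_csum_equiv {I J : Type} (e : I ≃ J) (f : J → S) :
    csum (fun i => f (e i)) = csum f := by
  have h := csum_partition (fun i => e i) (fun i => f (e i))
  rw [← h]
  congr 1
  funext j
  letI : Unique {i : I // e i = j} :=
    ⟨⟨⟨e.symm j, e.apply_symm_apply j⟩⟩,
      fun x => Subtype.ext (e.injective (by
        rw [x.2]; exact (e.apply_symm_apply j).symm))⟩
  rw [csum_unique]
  exact congrArg f (e.apply_symm_apply j)

lemma my_csum_sigma {I : Type} {T : I → Type} (f : (Σ i, T i) → S) :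
    csum (fun i => csum (fun t : T i => f ⟨i, t⟩)) = csum f := by
  have h := csum_partition (Sigma.fst : (Σ i, T i) → I) f
  rw [← h]
  congr 1
  funext i
  exact my_csum_equiv
    (⟨fun t => ⟨⟨i, t⟩, rfl⟩, fun x => x.2 ▸ x.1.2, fun t => rfl,
      fun x => by
        obtain ⟨⟨j, t⟩, h⟩ := x
        subst h
        rfl⟩ : T i ≃ {x : Σ i, T i // x.1 = i})
    (fun x => f x.1)

/-- The set of factorizations of `z` through a binary operation `op`. -/
def PairFac {E : Type} (op : E → E → E) (z : E) : Type :=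
  {p : E × E // op p.1 p.2 = z}

/-- Convolution product associated to a binary operation. -/
noncomputable def conv2 {E : Type} (op : E → E → E) (F G : E → S) : E → S :=
  fun z => csum (fun t : PairFac op z => G t.1.2 * F t.1.1)

/-- The iterated factorization index type. -/
def Tri {E : Type} (comp tens : E → E → E) (z : E) : Type :=
  Σ x : Σ t : PairFac comp z, PairFac tens t.1.2, PairFac tens x.1.1.1

/-- The interchange bijection between iterated factorization sets. -/
def triMap {E : Type} (comp tens : E → E → E)
    (hint : ∀ p q x y : E, tens (comp p x) (comp q y) = comp (tens p q) (tens x y))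
    (z : E) (y : Tri comp tens z) : Tri tens comp z :=
  ⟨⟨⟨(comp y.2.1.1 y.1.2.1.1, comp y.2.1.2 y.1.2.1.2),
      by rw [hint, y.2.2, y.1.2.2]; exact y.1.1.2⟩,
    ⟨(y.2.1.2, y.1.2.1.2), rfl⟩⟩,
   ⟨(y.2.1.1, y.1.2.1.1), rfl⟩⟩

lemma triMap_invol {E : Type} (comp tens : E → E → E)
    (h1 : ∀ p q x y : E, tens (comp p x) (comp q y) = comp (tens p q) (tens x y))
    (h2 : ∀ p q x y : E, comp (tens p x) (tens q y) = tens (comp p q) (comp x y))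
    (z : E) : ∀ y : Tri comp tens z,
      triMap tens comp h2 z (triMap comp tens h1 z y) = y := by
  rintro ⟨⟨⟨⟨α, β⟩, hαβ⟩, ⟨⟨u, v⟩, huv⟩⟩, ⟨⟨p, q⟩, hpq⟩⟩
  dsimp only [PairFac] at huv hpq
  subst huv
  subst hpq
  rfl

lemma core_compat {E : Type} (comp tens : E → E → E)
    (hint : ∀ p q x y : E, tens (comp p x) (comp q y) = comp (tens p q) (tens x y))
    (F G H K : E → S)
    (hc : (∀ x s, G x * s = s * G x) ∨ (∀ x s, H x * s = s * H x)) :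
    conv2 comp (conv2 tens F G) (conv2 tens H K)
      = conv2 tens (conv2 comp F H) (conv2 comp G K) := by
  have hcomm : ∀ u q : E, H u * G q = G q * H u := by
    rcases hc with hG | hH
    · exact fun u q => (hG q (H u)).symm
    · exact fun u q => hH u (G q)
  have hterm : ∀ p q u v : E,
      (K v * H u) * (G q * F p) = (K v * G q) * (H u * F p) := by
    intro p q u v
    rw [mul_assoc, mul_assoc]
    congr 1
    rw [← mul_assoc, hcomm, mul_assoc]
  have hint' : ∀ p q x y : E, comp (tens p x) (tens q y) = tens (comp p q) (comp x y) :=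
    fun p q x y => (hint p x q y).symm
  funext z
  have L1 : conv2 comp (conv2 tens F G) (conv2 tens H K) z
      = csum (fun t : PairFac comp z =>
          csum (fun s : PairFac tens t.1.2 =>
            csum (fun r : PairFac tens t.1.1 =>
              (K s.1.2 * H s.1.1) * (G r.1.2 * F r.1.1)))) := by
    show csum _ = _
    congr 1
    funext t
    show conv2 tens H K t.1.2 * conv2 tens F G t.1.1 = _
    rw [conv2, CompleteSemiring.csum_mul_right]
    congr 1
    funext s
    rw [conv2, CompleteSemiring.csum_mul_left]
  have R1 : conv2 tens (conv2 comp F H) (conv2 comp G K) z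
      = csum (fun t : PairFac tens z =>
          csum (fun s : PairFac comp t.1.2 =>
            csum (fun r : PairFac comp t.1.1 =>
              (K s.1.2 * G s.1.1) * (H r.1.2 * F r.1.1)))) := by
    show csum _ = _
    congr 1
    funext t
    show conv2 comp G K t.1.2 * conv2 comp F H t.1.1 = _
    rw [conv2, CompleteSemiring.csum_mul_right]
    congr 1
    funext s
    rw [conv2, CompleteSemiring.csum_mul_left]
  have L2 := my_csum_sigma (S := S)
    (f := fun x : Σ t : PairFac comp z, PairFac tens t.1.2 =>
      csum (fun r : PairFac tens x.1.1.1 =>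
        (K x.2.1.2 * H x.2.1.1) * (G r.1.2 * F r.1.1)))
  have L3 := my_csum_sigma (S := S)
    (T := fun x : Σ t : PairFac comp z, PairFac tens t.1.2 => PairFac tens x.1.1.1)
    (f := fun y : Tri comp tens z =>
      (K y.1.2.1.2 * H y.1.2.1.1) * (G y.2.1.2 * F y.2.1.1))
  have R2 := my_csum_sigma (S := S)
    (f := fun x : Σ t : PairFac tens z, PairFac comp t.1.2 =>
      csum (fun r : PairFac comp x.1.1.1 =>
        (K x.2.1.2 * G x.2.1.1) * (H r.1.2 * F r.1.1)))
  have R3 := my_csum_sigma (S := S)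
    (T := fun x : Σ t : PairFac tens z, PairFac comp t.1.2 => PairFac comp x.1.1.1)
    (f := fun y : Tri tens comp z =>
      (K y.1.2.1.2 * G y.1.2.1.1) * (H y.2.1.2 * F y.2.1.1))
  have haveL : conv2 comp (conv2 tens F G) (conv2 tens H K) z
      = csum (fun y : Tri comp tens z =>
          (K y.1.2.1.2 * H y.1.2.1.1) * (G y.2.1.2 * F y.2.1.1)) :=
    L1.trans (L2.trans L3)
  have haveR : conv2 tens (conv2 comp F H) (conv2 comp G K) z
      = csum (fun y : Tri tens comp z =>
          (K y.1.2.1.2 * G y.1.2.1.1) * (H y.2.1.2 * F y.2.1.1)) :=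
    R1.trans (R2.trans R3)
  rw [haveL, haveR]
  rw [← my_csum_equiv
    (⟨triMap comp tens hint z, triMap tens comp hint' z,
      triMap_invol comp tens hint hint' z, triMap_invol tens comp hint' hint z⟩ :
        Tri comp tens z ≃ Tri tens comp z)
    (fun y : Tri tens comp z =>
      (K y.1.2.1.2 * G y.1.2.1.1) * (H y.2.1.2 * F y.2.1.1))]
  congr 1
  funext y
  exact hterm y.2.1.1 y.2.1.2 y.1.2.1.1 y.1.2.1.2

end AuxSum

section Transfer

variable {C : Type} [SmallCategory C] (M : StrictMonoidalStruct C)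
  (hone : ∀ X : C, X = M.unit)

include hone

/-- Transport a morphism to an endomorphism of the unit object. -/
def toE {X Y : C} (f : X ⟶ Y) : M.unit ⟶ M.unit :=
  cast (by rw [hone X, hone Y]) f

lemma toE_self (f : M.unit ⟶ M.unit) : toE M hone f = f := cast_eq _ f

lemma toE_comp {X Y Z : C} (f : X ⟶ Y) (g : Y ⟶ Z) :
    toE M hone (f ≫ g) = toE M hone f ≫ toE M hone g := by
  have hX := hone X; subst hX
  have hY := hone Y; subst hY
  have hZ := hone Z; subst hZ
  rw [toE_self, toE_self, toE_self]

/-- The tensor product on endomorphisms of the unit. -/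
def tens (x y : M.unit ⟶ M.unit) : M.unit ⟶ M.unit :=
  toE M hone (M.tH x y)

lemma toE_tH {X Y X' Y' : C} (f : X ⟶ Y) (g : X' ⟶ Y') :
    toE M hone (M.tH f g) = tens M hone (toE M hone f) (toE M hone g) := by
  have hX := hone X; subst hX
  have hY := hone Y; subst hY
  have hX' := hone X'; subst hX'
  have hY' := hone Y'; subst hY'
  rw [toE_self M hone f, toE_self M hone g]
  rfl

lemma hint_E : ∀ p q x y : M.unit ⟶ M.unit,
    tens M hone (p ≫ x) (q ≫ y) = tens M hone p q ≫ tens M hone x y := by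
  intro p q x y
  unfold tens
  rw [M.interchange, toE_comp]

/-- Transport an element of `Mor C` to an endomorphism of the unit. -/
def morE (m : Mor C) : M.unit ⟶ M.unit := toE M hone m.2.2

lemma mor_eta (m : Mor C) : m = ⟨M.unit, M.unit, morE M hone m⟩ := by
  obtain ⟨X, Y, f⟩ := m
  have hX := hone X; subst hX
  have hY := hone Y; subst hY
  show _ = (⟨M.unit, M.unit, toE M hone f⟩ : Mor C)
  rw [toE_self]

lemma morE_tMor (m m' : Mor C) :
    morE M hone (M.tMor m m') = tens M hone (morE M hone m) (morE M hone m') := by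
  obtain ⟨X, Y, f⟩ := m
  obtain ⟨X', Y', g⟩ := m'
  have hX := hone X; subst hX
  have hY := hone Y; subst hY
  have hX' := hone X'; subst hX'
  have hY' := hone Y'; subst hY'
  show toE M hone (M.tH f g) = tens M hone (toE M hone f) (toE M hone g)
  exact toE_tH M hone f g

variable {S : Type} [Semiring S] [CompleteSemiring S]

lemma convC_transfer (f g : Mor C → S) (γm : M.unit ⟶ M.unit) :
    convC f g ⟨M.unit, M.unit, γm⟩
      = conv2 (fun x y : M.unit ⟶ M.unit => x ≫ y)
          (fun x => f ⟨M.unit, M.unit, x⟩) (fun x => g ⟨M.unit, M.unit, x⟩) γm := by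
  let e : PairFac (fun x y : M.unit ⟶ M.unit => x ≫ y) γm ≃
      Σ Z : C, {p : (M.unit ⟶ Z) × (Z ⟶ M.unit) // p.1 ≫ p.2 = γm} :=
    { toFun := fun x => ⟨M.unit, x⟩
      invFun := fun t => ⟨(toE M hone t.2.1.1, toE M hone t.2.1.2), by
        show toE M hone t.2.1.1 ≫ toE M hone t.2.1.2 = γm
        rw [← toE_comp, t.2.2, toE_self]⟩
      left_inv := fun x => by
        obtain ⟨⟨x1, x2⟩, hx⟩ := x
        apply Subtype.ext
        show (toE M hone x1, toE M hone x2) = (x1, x2)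
        rw [toE_self, toE_self]
      right_inv := fun t => by
        obtain ⟨Z, ⟨p1, p2⟩, h⟩ := t
        have hZ := hone Z; subst hZ
        exact Sigma.ext rfl (heq_of_eq (Subtype.ext (by
          show (toE M hone p1, toE M hone p2) = (p1, p2)
          rw [toE_self, toE_self]))) }
  exact (my_csum_equiv e
    (fun t : Σ Z : C, {p : (M.unit ⟶ Z) × (Z ⟶ M.unit) // p.1 ≫ p.2 = γm} =>
      g ⟨t.1, M.unit, t.2.1.2⟩ * f ⟨M.unit, t.1, t.2.1.1⟩)).symm

lemma convM_transfer (f g : Mor C → S) (γm : M.unit ⟶ M.unit) :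
    convM M f g ⟨M.unit, M.unit, γm⟩
      = conv2 (tens M hone)
          (fun x => f ⟨M.unit, M.unit, x⟩) (fun x => g ⟨M.unit, M.unit, x⟩) γm := by
  let e : PairFac (tens M hone) γm ≃
      {p : Mor C × Mor C // M.tMor p.1 p.2 = ⟨M.unit, M.unit, γm⟩} :=
    { toFun := fun x => ⟨(⟨M.unit, M.unit, x.1.1⟩, ⟨M.unit, M.unit, x.1.2⟩), by
        rw [mor_eta M hone
          (M.tMor ⟨M.unit, M.unit, x.1.1⟩ ⟨M.unit, M.unit, x.1.2⟩),
            morE_tMor M hone ⟨M.unit, M.unit, x.1.1⟩ ⟨M.unit, M.unit, x.1.2⟩]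
        show (⟨M.unit, M.unit,
          tens M hone (toE M hone x.1.1) (toE M hone x.1.2)⟩ : Mor C) = _
        rw [toE_self, toE_self, x.2]⟩
      invFun := fun t => ⟨(morE M hone t.1.1, morE M hone t.1.2), by
        rw [← morE_tMor, t.2]
        show toE M hone γm = γm
        exact toE_self M hone γm⟩
      left_inv := fun x => by
        obtain ⟨⟨x1, x2⟩, hx⟩ := x
        apply Subtype.ext
        show (toE M hone x1, toE M hone x2) = (x1, x2)
        rw [toE_self, toE_self]
      right_inv := fun t => by
        obtain ⟨⟨m, m'⟩, ht⟩ := t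
        apply Subtype.ext
        show ((⟨M.unit, M.unit, morE M hone m⟩ : Mor C),
              (⟨M.unit, M.unit, morE M hone m'⟩ : Mor C)) = (m, m')
        rw [← mor_eta, ← mor_eta]; rfl }
  exact (my_csum_equiv e
    (fun t : {p : Mor C × Mor C // M.tMor p.1 p.2 = ⟨M.unit, M.unit, γm⟩} =>
      g t.1.2 * f t.1.1)).symm

end Transfer

/-- If the strict monoidal category `C` has exactly one object, then for elements
`a, b, c, d` of `Q_S(C)` such that `b` or `c` maps entirely into the center of `S`, the
multiplicative compatibility relation `(a × b) · (c × d) = (a · c) × (b · d)` holds. -/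
theorem mult_compat_one_object (S : Type) [Semiring S] [CompleteSemiring S]
    (C : Type) [SmallCategory C] (M : StrictMonoidalStruct C)
    (hone : ∀ X : C, X = M.unit)
    (a b c d : Mor C → S)
    (hcenter : (∀ (γ : Mor C) (s : S), b γ * s = s * b γ) ∨
               (∀ (γ : Mor C) (s : S), c γ * s = s * c γ)) :
    convC (convM M a b) (convM M c d) = convM M (convC a c) (convC b d) := by
  funext γ
  obtain ⟨X, Y, γm⟩ := γ
  have hX := hone X; subst hX
  have hY := hone Y; subst hY
  rw [convC_transfer M hone, convM_transfer M hone]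
  have hA : (fun x => convM M a b ⟨M.unit, M.unit, x⟩)
      = conv2 (tens M hone) (fun x => a ⟨M.unit, M.unit, x⟩)
          (fun x => b ⟨M.unit, M.unit, x⟩) :=
    funext fun x => convM_transfer M hone a b x
  have hD : (fun x => convM M c d ⟨M.unit, M.unit, x⟩)
      = conv2 (tens M hone) (fun x => c ⟨M.unit, M.unit, x⟩)
          (fun x => d ⟨M.unit, M.unit, x⟩) :=
    funext fun x => convM_transfer M hone c d x
  have hAC : (fun x => convC a c ⟨M.unit, M.unit, x⟩)
      = conv2 (fun x y : M.unit ⟶ M.unit => x ≫ y)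
          (fun x => a ⟨M.unit, M.unit, x⟩) (fun x => c ⟨M.unit, M.unit, x⟩) :=
    funext fun x => convC_transfer M hone a c x
  have hBD : (fun x => convC b d ⟨M.unit, M.unit, x⟩)
      = conv2 (fun x y : M.unit ⟶ M.unit => x ≫ y)
          (fun x => b ⟨M.unit, M.unit, x⟩) (fun x => d ⟨M.unit, M.unit, x⟩) :=
    funext fun x => convC_transfer M hone b d x
  rw [hA, hD, hAC, hBD]
  exact congrFun (core_compat (fun x y : M.unit ⟶ M.unit => x ≫ y) (tens M hone)
    (hint_E M hone)
    (fun x => a ⟨M.unit, M.unit, x⟩) (fun x => b ⟨M.unit, M.unit, x⟩)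
    (fun x => c ⟨M.unit, M.unit, x⟩) (fun x => d ⟨M.unit, M.unit, x⟩)
    (hcenter.imp (fun h x s => h _ s) (fun h x s => h _ s))) γm
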